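/- The complete graph K_2 is multiplicative: for all graphs G and H, if there is a graph homomorphism G × H -> K_2, then there is a graph homomorphism G -> K_2 or a graph homomorphism H -> K_2. -/

import Mathlib

open SimpleGraph

variable {α β γ : Type*}

/-- Tensor (categorical) product of simple graphs. -/
def tensor (G : SimpleGraph α) (H : SimpleGraph β) : SimpleGraph (α × β) where
  Adj x y := G.Adj x.1 y.1 ∧ H.Adj x.2 y.2
  symm := ⟨fun _ _ ⟨h1, h2⟩ => ⟨h1.symm, h2.symm⟩⟩
  loopless := ⟨fun x ⟨h1, _⟩ => G.ne_of_adj h1 rfl⟩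

/-- Projection of a walk in the tensor product to the first factor. -/
def projG {G : SimpleGraph α} {H : SimpleGraph β} :
    ∀ {x y : α × β}, (tensor G H).Walk x y → G.Walk x.1 y.1
  | _, _, SimpleGraph.Walk.nil => SimpleGraph.Walk.nil
  | _, _, SimpleGraph.Walk.cons h p => SimpleGraph.Walk.cons h.1 (projG p)

/-- Projection of a walk in the tensor product to the second factor. -/
def projH {G : SimpleGraph α} {H : SimpleGraph β} :
    ∀ {x y : α × β}, (tensor G H).Walk x y → H.Walk x.2 y.2
  | _, _, SimpleGraph.Walk.nil => SimpleGraph.Walk.nil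
  | _, _, SimpleGraph.Walk.cons h p => SimpleGraph.Walk.cons h.2 (projH p)

/-- One-step reduction: deleting a consecutive backtracking pair `e, e⁻¹`. -/
inductive RedStep (G : SimpleGraph α) : ∀ {u v : α}, G.Walk u v → G.Walk u v → Prop
  | cancel {u v a b : α} (h : G.Adj a b) (p : G.Walk u a) (q : G.Walk a v) :
      RedStep G (p.append (SimpleGraph.Walk.cons h (SimpleGraph.Walk.cons h.symm q)))
        (p.append q)

/-- A walk is reduced if no backtracking cancellation applies to it. -/
def Reduced {G : SimpleGraph α} {u v : α} (W : G.Walk u v) : Prop :=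
  ∀ W', ¬ RedStep G W W'

/-- Homotopy of walks: equivalence generated by cancellations. -/
def RedEquiv (G : SimpleGraph α) {u v : α} (W W' : G.Walk u v) : Prop :=
  Relation.EqvGen (fun p q => RedStep G p q) W W'

/-- One elementary step of square-equivalence. -/
inductive SqStep (G : SimpleGraph α) : ∀ {u v : α}, G.Walk u v → G.Walk u v → Prop
  | cancel {u v a b : α} (h : G.Adj a b) (p : G.Walk u a) (q : G.Walk a v) :
      SqStep G (p.append (SimpleGraph.Walk.cons h (SimpleGraph.Walk.cons h.symm q)))
        (p.append q)
  | square {u v a b c d : α} (hab : G.Adj a b) (hbc : G.Adj b c) (had : G.Adj a d)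
      (hdc : G.Adj d c) (p : G.Walk u a) (q : G.Walk c v) :
      SqStep G (p.append (SimpleGraph.Walk.cons hab (SimpleGraph.Walk.cons hbc q)))
        (p.append (SimpleGraph.Walk.cons had (SimpleGraph.Walk.cons hdc q)))

/-- Square-equivalence of walks. -/
def SqEquiv (G : SimpleGraph α) {u v : α} (W W' : G.Walk u v) : Prop :=
  Relation.EqvGen (fun p q => SqStep G p q) W W'

/-- Natural-number power of a closed walk (iterated concatenation). -/
def wpow {G : SimpleGraph α} {u : α} (W : G.Walk u u) : ℕ → G.Walk u u
  | 0 => SimpleGraph.Walk.nil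
  | n + 1 => W.append (wpow W n)

/-- Integer power of a closed walk. -/
def wzpow {G : SimpleGraph α} {u : α} (W : G.Walk u u) : ℤ → G.Walk u u
  | Int.ofNat n => wpow W n
  | Int.negSucc n => wpow W.reverse (n + 1)

/-- A walk `p` is a prefix of `q` (same starting vertex). -/
def WalkPrefix {G : SimpleGraph α} {u x y : α} (p : G.Walk u x) (q : G.Walk u y) : Prop :=
  ∃ r : G.Walk x y, q = p.append r

/-- `K` is square-free: every square is trivial. -/
def SqFree (K : SimpleGraph γ) : Prop :=
  ∀ a b c d : γ, K.Adj a b → K.Adj b c → K.Adj c d → K.Adj d a → a = c ∨ b = d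

/-- The circular clique `K_{p/q}` on `ZMod p`. -/
def circClique (p q : ℕ) : SimpleGraph (ZMod p) where
  Adj i j := i ≠ j ∧ ∃ k : ℕ, q ≤ k ∧ k ≤ p - q ∧ (j = i + (k : ZMod p) ∨ i = j + (k : ZMod p))
  symm := by
    constructor
    rintro i j ⟨hne, k, h1, h2, h3 | h3⟩
    · exact ⟨hne.symm, k, h1, h2, Or.inr h3⟩
    · exact ⟨hne.symm, k, h1, h2, Or.inl h3⟩
  loopless := ⟨fun i h => h.1 rfl⟩


lemma parity_eq' {G : SimpleGraph α} (hno : ∀ (u : α) (p : G.Walk u u), ¬ Odd p.length)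
    {u v : α} (p q : G.Walk u v) : Odd p.length ↔ Odd q.length := by
  have := hno u (p.append q.reverse)
  rw [Walk.length_append, Walk.length_reverse] at this
  simp only [Nat.odd_iff] at this ⊢
  omega

lemma length_cast' {G : SimpleGraph α} {x y v : α} (h : x = y) (p : G.Walk x v) :
    (h ▸ p : G.Walk y v).length = p.length := by subst h; rfl

lemma colorable_of_no_odd' {G : SimpleGraph α}
    (hno : ∀ (u : α) (p : G.Walk u u), ¬ Odd p.length) : G.Colorable 2 := by
  classical
  have hreach : ∀ v : α, G.Reachable (G.connectedComponentMk v).out v := by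
    intro v
    exact ConnectedComponent.eq.mp ((G.connectedComponentMk v).out_eq)
  let c : α → Bool := fun v => decide (Odd (hreach v).some.length)
  have hc : ∀ {a b : α}, G.Adj a b → c a ≠ c b := by
    intro a b hab
    have hcomp : (G.connectedComponentMk a).out = (G.connectedComponentMk b).out := by
      congr 1
      exact ConnectedComponent.sound ⟨Walk.cons hab Walk.nil⟩
    have key : Odd (hreach b).some.length ↔
        Odd (hcomp ▸ ((hreach a).some.append (Walk.cons hab Walk.nil))).length :=
      parity_eq' hno _ _
    rw [length_cast', Walk.length_append, Walk.length_cons, Walk.length_nil] at key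
    simp only [c, ne_eq, decide_eq_decide]
    simp only [Nat.odd_iff] at key ⊢
    omega
  exact ⟨Coloring.mk (fun v => finTwoEquiv.symm (c v))
    fun hab h2 => hc hab (finTwoEquiv.symm.injective h2)⟩

lemma zipWalk' {G : SimpleGraph α} {H : SimpleGraph β} {a a' : α} (p : G.Walk a a') :
    ∀ {b b' : β} (q : H.Walk b b'), p.length = q.length →
      ∃ w : (tensor G H).Walk (a, b) (a', b'), w.length = p.length := by
  induction p with
  | nil =>
    intro b b' q hq
    cases q with
    | nil => exact ⟨Walk.nil, rfl⟩
    | cons _ _ => simp at hq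
  | cons hg p ih =>
    intro b b' q hq
    cases q with
    | nil => simp at hq
    | cons hh q =>
      simp only [Walk.length_cons, Nat.add_right_cancel_iff] at hq
      obtain ⟨w, hw⟩ := ih q hq
      exact ⟨Walk.cons ⟨hg, hh⟩ w, congrArg (· + 1) hw⟩

lemma wpow_length' {G : SimpleGraph α} {u : α} (W : G.Walk u u) (n : ℕ) :
    (wpow W n).length = n * W.length := by
  induction n with
  | zero => simp [wpow]
  | succ n ih => simp [wpow, Walk.length_append, ih]; ring

/-- `K₂` is multiplicative: if `G × H` is 2-colorable (bipartite), then
`G` or `H` is 2-colorable. -/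
theorem K2_multiplicative (G : SimpleGraph α) (H : SimpleGraph β)
    (h : (tensor G H).Colorable 2) : G.Colorable 2 ∨ H.Colorable 2 := by
  by_contra hcon
  push_neg at hcon
  obtain ⟨hG, hH⟩ := hcon
  have hGo : ∃ (u : α) (p : G.Walk u u), Odd p.length := by
    by_contra hx; push_neg at hx
    exact hG (colorable_of_no_odd' fun u p => by simpa using hx u p)
  have hHo : ∃ (v : β) (q : H.Walk v v), Odd q.length := by
    by_contra hx; push_neg at hx
    exact hH (colorable_of_no_odd' fun u p => by simpa using hx u p)
  obtain ⟨u, p, hp⟩ := hGo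
  obtain ⟨v, q, hq⟩ := hHo
  have hlen : (wpow p q.length).length = (wpow q p.length).length := by
    rw [wpow_length', wpow_length', Nat.mul_comm]
  obtain ⟨w, hw⟩ := zipWalk' (wpow p q.length) (wpow q p.length) hlen
  have hodd : Odd w.length := by
    rw [hw, wpow_length']
    exact hq.mul hp
  obtain ⟨c⟩ := h
  let c' : (tensor G H).Coloring Bool := (tensor G H).recolorOfEquiv finTwoEquiv c
  have := (c'.odd_length_iff_not_congr w).mp hodd
  simp_all
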